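/- Let 0 < λ < ν, and for t ≥ 0 define q_t = (ν e^{(ν-λ)t} - ν)/(ν e^{(ν-λ)t} - λ). For s ∈ [0,1) define G(s) = 1 - ((ν - λ s)/(ν (1 - s)))^{-α/(ν-λ)}, where α > 0. Then for every t ≥ 0, G(q_t) = 1 - e^{-αt}. Moreover q is strictly increasing on [0,∞), q_0 = 0, and lim_{t→∞} q_t = 1. -/

import Mathlib

noncomputable def qfun (lam nu t : ℝ) : ℝ :=
  (nu * Real.exp ((nu - lam) * t) - nu) / (nu * Real.exp ((nu - lam) * t) - lam)

noncomputable def Gfun (lam nu α s : ℝ) : ℝ :=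
  1 - ((nu - lam * s) / (nu * (1 - s))) ^ (-α / (nu - lam))

theorem stmt_13 (lam nu α : ℝ) (hlam : 0 < lam) (hlamnu : lam < nu) (hα : 0 < α) :
    (∀ t : ℝ, 0 ≤ t → Gfun lam nu α (qfun lam nu t) = 1 - Real.exp (-α * t)) ∧
    StrictMonoOn (qfun lam nu) (Set.Ici 0) ∧
    qfun lam nu 0 = 0 ∧
    Filter.Tendsto (qfun lam nu) Filter.atTop (nhds 1) := by
  have hnl : 0 < nu - lam := sub_pos.mpr hlamnu
  have hd : ∀ t : ℝ, 0 ≤ t → 0 < nu * Real.exp ((nu - lam) * t) - lam := by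
    intro t ht
    have h1 : (1:ℝ) ≤ Real.exp ((nu - lam) * t) :=
      Real.one_le_exp (mul_nonneg hnl.le ht)
    nlinarith [hlam.trans hlamnu]
  have hrw : ∀ t : ℝ, 0 ≤ t →
      qfun lam nu t = 1 - (nu - lam) / (nu * Real.exp ((nu - lam) * t) - lam) := by
    intro t ht
    have := hd t ht
    unfold qfun
    field_simp
    ring
  refine ⟨?_, ?_, ?_, ?_⟩
  · intro t ht
    set E := Real.exp ((nu - lam) * t) with hE
    have hE1 : (1:ℝ) ≤ E := Real.one_le_exp (mul_nonneg hnl.le ht)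
    have hdt := hd t ht
    have hq : qfun lam nu t = (nu * E - nu) / (nu * E - lam) := rfl
    have hratio : (nu - lam * qfun lam nu t) / (nu * (1 - qfun lam nu t)) = E := by
      rw [hq]
      have hnu : (0:ℝ) < nu := hlam.trans hlamnu
      have hne : nu * E - lam ≠ 0 := hdt.ne'
      have hne2 : nu - lam ≠ 0 := hnl.ne'
      field_simp
      rw [div_eq_iff (fun h => hne2 (by linear_combination h))]
      ring
    rw [Gfun, hratio, hE, ← Real.exp_one_rpow ((nu - lam) * t),
      ← Real.rpow_mul (Real.exp_pos 1).le, Real.exp_one_rpow]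
    congr 1
    field_simp
  · intro s hs t ht hst
    rw [hrw s hs, hrw t ht]
    have h1 : nu * Real.exp ((nu - lam) * s) - lam < nu * Real.exp ((nu - lam) * t) - lam := by
      have := Real.exp_lt_exp.mpr (mul_lt_mul_of_pos_left hst hnl)
      nlinarith [hlam.trans hlamnu]
    have := div_lt_div_of_pos_left hnl (hd s hs) h1
    linarith
  · simp [qfun]
  · have h1 : Filter.Tendsto (fun t : ℝ => nu * Real.exp ((nu - lam) * t) - lam)
        Filter.atTop Filter.atTop := by
      apply Filter.tendsto_atTop_add_const_right
      exact (Real.tendsto_exp_atTop.comp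
        (Filter.tendsto_id.const_mul_atTop hnl)).const_mul_atTop (hlam.trans hlamnu)
    have h2 : Filter.Tendsto (fun t : ℝ => 1 - (nu - lam) / (nu * Real.exp ((nu - lam) * t) - lam))
        Filter.atTop (nhds 1) := by
      have := Filter.Tendsto.div_atTop (tendsto_const_nhds (x := nu - lam)) h1
      simpa using tendsto_const_nhds.sub this
    refine h2.congr' ?_
    filter_upwards [Filter.eventually_ge_atTop 0] with t ht
    exact (hrw t ht).symm
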